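/- Topmost-mass characterization of the comonotone coupling: let P be a distribution over outcome vectors Θ → {o₁,...,o_m} with marginals p_{i,j}, all of whose support vectors are pairwise comparable (non-crossing). Define t_i = max{j : p_{i,j} > 0} and the topmost vector O_t by O_t(i) = o_{t_i}. Then P(O_t) = min_{i ∈ Θ} p_{i, t_i}. -/

import Mathlib

open Finset in
theorem comonotone_topmost_mass
    {Θ : Type*} [Fintype Θ] [DecidableEq Θ] [Nonempty Θ] {m : ℕ}
    (o : Fin m → ℝ) (ho : StrictMono o)
    (P : (Θ → Fin m) → ℝ)
    (hP0 : ∀ O, 0 ≤ P O) (hP1 : ∑ O : Θ → Fin m, P O = 1)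
    (p : Θ → Fin m → ℝ)
    (hmarg : ∀ i j, (∑ O : Θ → Fin m, if O i = j then P O else 0) = p i j)
    (hnoncross : ∀ O₁ O₂ : Θ → Fin m, 0 < P O₁ → 0 < P O₂ →
      (∀ i, O₁ i ≤ O₂ i) ∨ (∀ i, O₂ i ≤ O₁ i))
    (t : Θ → Fin m)
    (ht : ∀ i, 0 < p i (t i) ∧ ∀ j, 0 < p i j → j ≤ t i) :
    P (fun i => t i) = Finset.univ.inf' Finset.univ_nonempty (fun i => p i (t i)) := by
  classical
  -- P O ≤ p i (O i)
  have hle : ∀ (O : Θ → Fin m) (i : Θ) (j : Fin m), O i = j → P O ≤ p i j := by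
    intro O i j hj
    rw [← hmarg i j]
    have : P O = (if O i = j then P O else 0) := by simp [hj]
    rw [this]
    exact Finset.single_le_sum
      (f := fun O' => if O' i = j then P O' else 0)
      (fun O' _ => by split_ifs with h; exacts [hP0 O', le_rfl]) (Finset.mem_univ O)
  -- support elements are pointwise ≤ t
  have hA : ∀ O : Θ → Fin m, 0 < P O → ∀ i, O i ≤ t i := by
    intro O hO i
    exact (ht i).2 (O i) (lt_of_lt_of_le hO (hle O i (O i) rfl))
  -- key: there is i₀ such that every support O ≠ t has O i₀ < t i₀
  have hkey : ∃ i₀ : Θ, ∀ O : Θ → Fin m, 0 < P O → O ≠ t → O i₀ < t i₀ := by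
    set s' : Finset (Θ → Fin m) :=
      Finset.univ.filter (fun O => 0 < P O ∧ O ≠ t) with hs'
    by_cases hne : s'.Nonempty
    · obtain ⟨M, hM, hmax⟩ := s'.exists_maximal hne
      have hMmem := Finset.mem_filter.1 hM
      have hMtop : ∀ O ∈ s', O ≤ M := by
        intro O hO
        have hOmem := Finset.mem_filter.1 hO
        rcases hnoncross O M hOmem.2.1 hMmem.2.1 with h | h
        · exact h
        · by_contra hc
          exact hc (hmax hO h)
      have hMne : M ≠ t := hMmem.2.2
      obtain ⟨i₀, hi₀⟩ := Function.ne_iff.1 hMne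
      refine ⟨i₀, fun O hOpos hOne => ?_⟩
      have hOmem : O ∈ s' := Finset.mem_filter.2 ⟨Finset.mem_univ _, hOpos, hOne⟩
      have hMlt : M i₀ < t i₀ := lt_of_le_of_ne (hA M hMmem.2.1 i₀) hi₀
      exact lt_of_le_of_lt (hMtop O hOmem i₀) hMlt
    · obtain ⟨i₀⟩ := (inferInstance : Nonempty Θ)
      refine ⟨i₀, fun O hOpos hOne => ?_⟩
      exact absurd (Finset.mem_filter.2 ⟨Finset.mem_univ _, hOpos, hOne⟩)
        (fun h => hne ⟨O, h⟩)
  obtain ⟨i₀, hi₀⟩ := hkey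
  -- p i₀ (t i₀) = P t
  have h2 : p i₀ (t i₀) = P t := by
    rw [← hmarg i₀ (t i₀)]
    have := Finset.sum_eq_single_of_mem (s := Finset.univ)
      (f := fun O : Θ → Fin m => if O i₀ = t i₀ then P O else 0)
      t (Finset.mem_univ t) ?_
    · rw [this]; simp
    · intro O _ hOne
      split_ifs with h
      · by_contra hP
        have hpos : 0 < P O := lt_of_le_of_ne (hP0 O) (Ne.symm hP)
        exact absurd h (ne_of_lt (hi₀ O hpos hOne))
      · rfl
  have h1 : ∀ i, P t ≤ p i (t i) := fun i => hle t i (t i) rfl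
  refine le_antisymm ?_ ?_
  · exact Finset.le_inf' _ _ (fun i _ => h1 i)
  · calc Finset.univ.inf' Finset.univ_nonempty (fun i => p i (t i)) ≤ p i₀ (t i₀) :=
        Finset.inf'_le _ (Finset.mem_univ i₀)
      _ = P t := h2
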